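/- Let m, n ≥ 1 and k ≥ 0. There exist binary strings x, y with |x| = m, |y| = n, h(xy,yx) = k if and only if: (a) k ≤ m+n, (b) k is even, and (c) k ≤ m+n−gcd(m,n) whenever (m+n)/gcd(m,n) is odd. -/

import Mathlib

open Finset

/-! ### Per-cycle lemmas -/

section Cycle
variable {L : ℕ} [NeZero L]

/-- number of cyclic "changes" of a binary word on a cycle of length `L` -/
def cyc (t : Fin L → Fin 2) : ℕ :=
  (univ.filter (fun j : Fin L => t j ≠ t (j + 1))).card

lemma cyc_cast' (t : Fin L → Fin 2) : ((cyc t : ℕ) : ZMod 2) = 0 := by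
  have h1 : ((cyc t : ℕ) : ZMod 2)
      = ∑ j : Fin L, (((t j : ℕ) : ZMod 2) + ((t (j+1) : ℕ) : ZMod 2)) := by
    rw [cyc, Finset.card_filter, Nat.cast_sum]
    refine Finset.sum_congr rfl fun j _ => ?_
    have : ∀ a b : Fin 2, ((if a ≠ b then 1 else 0 : ℕ) : ZMod 2)
        = ((a : ℕ) : ZMod 2) + ((b : ℕ) : ZMod 2) := by decide
    exact this _ _
  rw [h1, Finset.sum_add_distrib]
  have h2 : ∑ j : Fin L, ((t (j+1) : ℕ) : ZMod 2) = ∑ j : Fin L, ((t j : ℕ) : ZMod 2) :=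
    Fintype.sum_equiv (Equiv.addRight 1) _ _ (fun j => rfl)
  rw [h2, ← two_mul]
  have : (2 : ZMod 2) = 0 := rfl
  rw [this, zero_mul]

lemma even_cyc (t : Fin L → Fin 2) : Even (cyc t) := by
  have := cyc_cast' t
  rwa [ZMod.natCast_eq_zero_iff, ← even_iff_two_dvd] at this

lemma cyc_le (t : Fin L → Fin 2) : cyc t ≤ L := by
  simpa [cyc] using Finset.card_filter_le univ (fun j : Fin L => t j ≠ t (j + 1))

lemma cyc_le_of_odd (hodd : Odd L) (t : Fin L → Fin 2) : cyc t ≤ L - 1 := by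
  have hle := cyc_le t
  have hne : cyc t ≠ L := by
    intro h
    have hev : Even (cyc t) := even_cyc t
    rw [h] at hev
    exact (Nat.not_even_iff_odd.mpr hodd) hev
  omega

/-- the alternating-prefix pattern -/
def pat (L c : ℕ) : Fin L → Fin 2 :=
  fun j => if j.val % 2 = 1 ∧ j.val < c then 1 else 0

lemma cyc_pat (hL : 2 ≤ L) (c : ℕ) (hc : Even c) (hcL : c ≤ L) :
    cyc (pat L c) = c := by
  have key : (univ.filter (fun j : Fin L => pat L c j ≠ pat L c (j + 1)))
      = univ.filter (fun j : Fin L => j.val < c) := by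
    apply Finset.filter_congr
    intro j _
    have hj : j.val < L := j.isLt
    have hval : (j + 1).val = (j.val + 1) % L := by
      rw [Fin.add_def, Fin.val_one', Nat.mod_eq_of_lt hL]
    have h2 : c % 2 = 0 := Nat.even_iff.mp hc
    rcases Nat.lt_or_ge (j.val + 1) L with h | h
    · have hb : (j + 1).val = j.val + 1 := by rw [hval, Nat.mod_eq_of_lt h]
      simp only [pat, ne_eq, hb]
      constructor
      · intro hne
        by_contra hge
        push_neg at hge
        have e1 : ¬ (j.val % 2 = 1 ∧ j.val < c) := by omega
        have e2 : ¬ ((j.val+1) % 2 = 1 ∧ j.val+1 < c) := by omega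
        rw [if_neg e1, if_neg e2] at hne
        exact hne rfl
      · intro hlt
        split_ifs with p q q
        · omega
        · exact one_ne_zero
        · exact zero_ne_one
        · omega
    · have hjL : j.val = L - 1 := by omega
      have hb : (j + 1).val = 0 := by
        rw [hval]
        have : j.val + 1 = L := by omega
        rw [this, Nat.mod_self]
      simp only [pat, ne_eq, hb]
      rw [if_neg (by omega : ¬ ((0:ℕ) % 2 = 1 ∧ (0:ℕ) < c))]
      constructor
      · intro hne
        by_contra hge
        push_neg at hge
        rw [if_neg (by omega)] at hne
        exact hne rfl
      · intro hlt
        have hcL' : c = L := by omega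
        have hLev : Even L := hcL' ▸ hc
        have : j.val % 2 = 1 := by
          rcases hLev with ⟨w, hw⟩
          omega
        rw [if_pos (by omega)]
        exact one_ne_zero
  rw [cyc, key]
  rcases Nat.lt_or_ge c L with hcl | hcl
  · have : (univ.filter (fun j : Fin L => j.val < c)) = Finset.Iio (⟨c, hcl⟩ : Fin L) := by
      ext j
      simp [Fin.lt_def]
    rw [this, Fin.card_Iio]
  · have hceq : c = L := by omega
    have : (univ.filter (fun j : Fin L => j.val < c)) = univ := by
      ext j
      simp only [mem_filter, mem_univ, true_and, iff_true]
      omega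
    rw [this, Finset.card_univ, Fintype.card_fin, hceq]

end Cycle

/-! ### injectivity of the cycle decomposition map -/

lemma phi_inj_aux {N m d L m' r₁ r₂ j₁ j₂ : ℕ}
    (hd : 0 < d) (hm' : m = d * m') (hdL : d * L = N)
    (hcop : Nat.Coprime L m')
    (hr₁ : r₁ < d) (hr₂ : r₂ < d) (hj₁ : j₁ < L) (hj₂ : j₂ < L)
    (h : (r₁ + j₁ * m) % N = (r₂ + j₂ * m) % N) :
    r₁ = r₂ ∧ j₁ = j₂ := by
  have hmod : Nat.ModEq N (r₁ + j₁ * m) (r₂ + j₂ * m) := h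
  have hdN : d ∣ N := ⟨L, hdL.symm⟩
  have hmodd : Nat.ModEq d (r₁ + j₁ * m) (r₂ + j₂ * m) := hmod.of_dvd hdN
  have hr : r₁ = r₂ := by
    have e1 : (r₁ + j₁ * m) % d = r₁ % d := by
      rw [hm', show j₁ * (d * m') = (j₁ * m') * d from by ring,
        Nat.add_mul_mod_self_right]
    have e2 : (r₂ + j₂ * m) % d = r₂ % d := by
      rw [hm', show j₂ * (d * m') = (j₂ * m') * d from by ring,
        Nat.add_mul_mod_self_right]
    have h3 : r₁ % d = r₂ % d := by
      have h4 : (r₁ + j₁ * m) % d = (r₂ + j₂ * m) % d := hmodd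
      omega
    rw [Nat.mod_eq_of_lt hr₁, Nat.mod_eq_of_lt hr₂] at h3
    exact h3
  subst hr
  have hmod2 : Nat.ModEq N (j₁ * m) (j₂ * m) :=
    Nat.ModEq.add_left_cancel' r₁ hmod
  have hdvd : (N : ℤ) ∣ (j₂ : ℤ) * m - (j₁ : ℤ) * m := by
    have := (Nat.modEq_iff_dvd).mp hmod2
    push_cast at this ⊢
    convert this using 1
  have hLd : (L : ℤ) ∣ ((j₂ : ℤ) - j₁) * m' := by
    have hN' : (N : ℤ) = (d : ℤ) * L := by exact_mod_cast hdL.symm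
    have hmm : (m : ℤ) = (d : ℤ) * m' := by exact_mod_cast hm'
    rw [hN'] at hdvd
    have h5 : (d:ℤ) * L ∣ (d:ℤ) * (((j₂ : ℤ) - j₁) * m') := by
      convert hdvd using 1
      rw [hmm]; ring
    exact (mul_dvd_mul_iff_left (by exact_mod_cast hd.ne' : (d:ℤ) ≠ 0)).mp h5
  have hLj : (L : ℤ) ∣ ((j₂ : ℤ) - j₁) := by
    have hcop' : IsCoprime (L : ℤ) (m' : ℤ) := by
      rw [Int.isCoprime_iff_gcd_eq_one]
      exact_mod_cast hcop
    exact hcop'.dvd_of_dvd_mul_right hLd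
  have hz : ((j₂ : ℤ) - j₁) = 0 := by
    rcases eq_or_ne ((j₂ : ℤ) - j₁) 0 with h0 | h0
    · exact h0
    · exfalso
      have h6 : (L:ℤ) ≤ |(j₂ : ℤ) - j₁| :=
        Int.le_of_dvd (abs_pos.mpr h0) ((dvd_abs _ _).mpr hLj)
      rcases abs_cases ((j₂ : ℤ) - j₁) with ⟨he, _⟩ | ⟨he, _⟩ <;> omega
  exact ⟨rfl, by omega⟩

/-! ### counting transport -/

lemma card_filter_equiv {α β : Type*} [Fintype α] [Fintype β] [DecidableEq β]
    (e : α ≃ β) (p : β → Prop) [DecidablePred p] :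
    (univ.filter fun a => p (e a)).card = (univ.filter p).card := by
  rw [← Finset.card_map e.toEmbedding]
  congr 1
  ext b
  simp only [Finset.mem_map, Finset.mem_filter, Finset.mem_univ, true_and,
    Equiv.coe_toEmbedding]
  constructor
  · rintro ⟨a, ha, rfl⟩; exact ha
  · intro hb; exact ⟨e.symm b, by simpa using hb, by simp⟩

lemma card_filter_prod {α β : Type*} [Fintype α] [Fintype β] [DecidableEq α]
    (P : α × β → Prop) [DecidablePred P] :
    (univ.filter P).card = ∑ a : α, (univ.filter fun b => P (a, b)).card := by
  rw [Finset.card_eq_sum_card_fiberwise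
    (f := Prod.fst) (t := univ) (fun x _ => mem_univ _)]
  refine Finset.sum_congr rfl fun a _ => ?_
  refine Finset.card_bij' (fun p _ => p.2) (fun b _ => (a, b)) ?_ ?_ ?_ ?_
  · intro p hp
    simp only [Finset.mem_filter, Finset.mem_univ, true_and] at hp ⊢
    rw [show (a, p.2) = p from Prod.ext hp.2.symm rfl]
    exact hp.1
  · intro b hb
    simp only [Finset.mem_filter, Finset.mem_univ, true_and] at hb ⊢
    exact ⟨hb, trivial⟩
  · intro p hp
    simp only [Finset.mem_filter, Finset.mem_univ, true_and] at hp
    exact Prod.ext hp.2.symm rfl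
  · intro b _
    rfl

lemma countP_ofFn {α : Type*} {n : ℕ} (h : Fin n → α) (p : α → Bool) :
    (List.ofFn h).countP p = (univ.filter fun i => p (h i)).card := by
  induction n with
  | zero => simp
  | succ n ih =>
      rw [List.ofFn_succ, List.countP_cons, ih (fun i => h i.succ),
        Finset.card_filter, Finset.card_filter, Fin.sum_univ_succ]
      exact Nat.add_comm _ _

lemma zip_ofFn {α β : Type*} {n : ℕ} (f : Fin n → α) (g : Fin n → β) :
    (List.ofFn f).zip (List.ofFn g) = List.ofFn fun i => (f i, g i) := by
  apply List.ext_getElem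
  · simp
  · intro i h1 h2
    simp [List.getElem_zip]

/-! ### the cyclic-shift count -/

/-- shift by `m` on `Fin N` -/
def sucm (N m : ℕ) (i : Fin N) : Fin N :=
  ⟨(i.val + m) % N, Nat.mod_lt _ i.pos⟩

/-- number of disagreements between `f` and its shift by `m` -/
def cnt (N m : ℕ) (f : Fin N → Fin 2) : ℕ :=
  (univ.filter fun i : Fin N => f i ≠ f (sucm N m i)).card

/-- the cycle decomposition map -/
def phi (N m : ℕ) (hN : 0 < N)
    (p : Fin (Nat.gcd m N) × Fin (N / Nat.gcd m N)) : Fin N :=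
  ⟨(p.1.val + p.2.val * m) % N, Nat.mod_lt _ hN⟩

lemma phi_facts {N m : ℕ} (hm : 0 < m) (hmN : m < N) :
    0 < Nat.gcd m N ∧ Nat.gcd m N ∣ m ∧ Nat.gcd m N ∣ N ∧
    Nat.gcd m N * (N / Nat.gcd m N) = N ∧ 2 ≤ N / Nat.gcd m N := by
  have hd0 : 0 < Nat.gcd m N := Nat.gcd_pos_of_pos_left _ hm
  have hdm : Nat.gcd m N ∣ m := Nat.gcd_dvd_left _ _
  have hdN : Nat.gcd m N ∣ N := Nat.gcd_dvd_right _ _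
  have hdL : Nat.gcd m N * (N / Nat.gcd m N) = N := Nat.mul_div_cancel' hdN
  have hdlem : Nat.gcd m N ≤ m := Nat.le_of_dvd hm hdm
  have hL2 : 2 ≤ N / Nat.gcd m N := by
    by_contra hc
    push_neg at hc
    interval_cases h : (N / Nat.gcd m N) <;> omega
  exact ⟨hd0, hdm, hdN, hdL, hL2⟩

lemma phi_bij {N m : ℕ} (hm0 : 0 < m) (hmN : m < N) :
    Function.Bijective (phi N m (hm0.trans hmN)) := by
  obtain ⟨hd0, hdm, hdN, hdL, hL2⟩ := phi_facts hm0 hmN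
  obtain ⟨m', hm'⟩ := hdm
  have hcop : Nat.Coprime (N / Nat.gcd m N) m' := by
    have h0 := Nat.coprime_div_gcd_div_gcd (m := m) (n := N) hd0
    have h1 : m / Nat.gcd m N = m' := Nat.div_eq_of_eq_mul_right hd0 hm' 
    rw [h1] at h0
    exact h0.symm
  rw [Fintype.bijective_iff_injective_and_card]
  constructor
  · rintro ⟨r₁, j₁⟩ ⟨r₂, j₂⟩ h
    simp only [phi, Fin.mk.injEq] at h
    obtain ⟨h1, h2⟩ := phi_inj_aux hd0 hm' hdL hcop r₁.isLt r₂.isLt j₁.isLt j₂.isLt h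
    exact Prod.ext (Fin.ext h1) (Fin.ext h2)
  · simp only [Fintype.card_prod, Fintype.card_fin]
    exact hdL

lemma phi_succ {N m : ℕ} (hm0 : 0 < m) (hmN : m < N)
    [NeZero (N / Nat.gcd m N)]
    (r : Fin (Nat.gcd m N)) (j : Fin (N / Nat.gcd m N)) :
    phi N m (hm0.trans hmN) (r, j + 1) = sucm N m (phi N m (hm0.trans hmN) (r, j)) := by
  obtain ⟨hd0, hdm, hdN, hdL, hL2⟩ := phi_facts hm0 hmN
  obtain ⟨m', hm'⟩ := hdm
  apply Fin.ext
  simp only [phi, sucm]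
  rw [Nat.mod_add_mod]
  have hval : (j + 1).val = (j.val + 1) % (N / Nat.gcd m N) := by
    rw [Fin.add_def, Fin.val_one', Nat.mod_eq_of_lt hL2]
  rcases Nat.lt_or_ge (j.val + 1) (N / Nat.gcd m N) with h | h
  · rw [hval, Nat.mod_eq_of_lt h]
    congr 1
    ring
  · have hj1 : j.val + 1 = N / Nat.gcd m N := by
      have := j.isLt; omega
    rw [hval, hj1, Nat.mod_self, Nat.mul_comm 0 m, Nat.mul_zero, Nat.add_zero]
    rw [show r.val + j.val * m + m = r.val + (j.val + 1) * m from by ring, hj1]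
    have hdvd : (N / Nat.gcd m N) * m = N * m' := by
      calc (N / Nat.gcd m N) * m = (N / Nat.gcd m N) * (Nat.gcd m N * m') := by rw [← hm']
        _ = (Nat.gcd m N * (N / Nat.gcd m N)) * m' := by ring
        _ = N * m' := by rw [hdL]
    rw [hdvd, ← Nat.add_mul_mod_self_left]

lemma cnt_eq_sum {N m : ℕ} (hm0 : 0 < m) (hmN : m < N)
    [NeZero (N / Nat.gcd m N)] (f : Fin N → Fin 2) :
    cnt N m f = ∑ r : Fin (Nat.gcd m N),
      cyc (fun j => f (phi N m (hm0.trans hmN) (r, j))) := by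
  have hbij := phi_bij hm0 hmN
  set e := Equiv.ofBijective _ hbij with he
  have h1 : cnt N m f
      = (univ.filter fun p : Fin (Nat.gcd m N) × Fin (N / Nat.gcd m N) =>
          f (phi N m (hm0.trans hmN) p) ≠ f (sucm N m (phi N m (hm0.trans hmN) p))).card := by
    rw [cnt, ← card_filter_equiv e (fun i => f i ≠ f (sucm N m i))]
    rfl
  rw [h1, card_filter_prod]
  refine Finset.sum_congr rfl fun r _ => ?_
  rw [cyc]
  apply congrArg
  apply Finset.filter_congr
  intro j _
  rw [phi_succ hm0 hmN r j]

/-! ### greedy distribution -/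

lemma sum_min (M k : ℕ) (d : ℕ) :
    ∑ r ∈ Finset.range d, min M (k - M * r) = min k (M * d) := by
  induction d with
  | zero => simp
  | succ d ih =>
      rw [Finset.sum_range_succ, ih]
      have h1 : M * (d + 1) = M * d + M := by ring
      rw [h1]
      generalize M * d = a
      omega

/-! ### bridge to lists -/

/-- Hamming distance between two lists (of equal length): number of
positions where they differ. -/
def hdist {α : Type*} [DecidableEq α] (u v : List α) : ℕ :=
  ((u.zip v).filter (fun p => decide (p.1 ≠ p.2))).length

lemma hdist_eq_cnt {N m n : ℕ} (hm : 0 < m) (hN : N = m + n)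
    (x y : List (Fin 2)) (hx : x.length = m) (hy : y.length = n)
    (f : Fin N → Fin 2) (hs : x ++ y = List.ofFn f) :
    hdist (x ++ y) (y ++ x) = cnt N m f := by
  have hslen : (x ++ y).length = N := by simp [hx, hy, hN]
  have hrot : y ++ x = (x ++ y).rotate m := by
    rw [List.rotate_eq_drop_append_take (by omega : m ≤ (x++y).length),
      List.drop_left' hx, List.take_left' hx]
  have hrot2 : (x ++ y).rotate m = List.ofFn (fun i : Fin N => f (sucm N m i)) := by
    apply List.ext_getElem
    · simp [hslen]
    · intro i h1 h2
      rw [List.getElem_rotate]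
      simp only [List.getElem_ofFn, hslen, hs]
      congr 1
      apply Fin.ext
      simp [sucm]
  rw [hdist, hrot, hrot2, hs, ← List.countP_eq_length_filter,
    zip_ofFn, countP_ofFn]
  rw [cnt]
  apply congrArg
  apply Finset.filter_congr
  intro i _
  simp

/-! ### main theorem, function version -/

theorem cnt_iff (N m n k : ℕ) (hm : 1 ≤ m) (hn : 1 ≤ n) (hN : N = m + n) :
    (∃ f : Fin N → Fin 2, cnt N m f = k) ↔
      (k ≤ N ∧ Even k ∧
        (Odd (N / Nat.gcd m N) → k ≤ N - Nat.gcd m N)) := by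
  have hmN : m < N := by omega
  have hm0 : 0 < m := hm
  obtain ⟨hd0, hdm, hdN, hdL, hL2⟩ := phi_facts hm0 hmN
  haveI : NeZero (N / Nat.gcd m N) := ⟨by omega⟩
  set d := Nat.gcd m N with hd
  set L := N / Nat.gcd m N with hL
  constructor
  · rintro ⟨f, rfl⟩
    rw [cnt_eq_sum hm0 hmN f]
    refine ⟨?_, ?_, ?_⟩
    · calc ∑ r : Fin d, cyc (fun j => f (phi N m (hm0.trans hmN) (r, j)))
          ≤ ∑ _r : Fin d, L := Finset.sum_le_sum (fun r _ => cyc_le _)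
        _ = d * L := by rw [Finset.sum_const, Finset.card_univ, Fintype.card_fin, smul_eq_mul]
        _ = N := hdL
    · rw [even_iff_two_dvd]
      exact Finset.dvd_sum fun r _ => (even_cyc _).two_dvd
    · intro hodd
      calc ∑ r : Fin d, cyc (fun j => f (phi N m (hm0.trans hmN) (r, j)))
          ≤ ∑ _r : Fin d, (L - 1) := Finset.sum_le_sum (fun r _ => cyc_le_of_odd hodd _)
        _ = d * (L - 1) := by rw [Finset.sum_const, Finset.card_univ, Fintype.card_fin, smul_eq_mul]
        _ ≤ N - d := by
            have h7 : d * (L - 1) + d * 1 = d * L := by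
              rw [← Nat.mul_add]
              congr 1
              omega
            omega
  · rintro ⟨hk1, hk2, hk3⟩
    set M := 2 * (L / 2) with hM
    have hMeven : Even M := ⟨L/2, by omega⟩
    have hML : M ≤ L := by omega
    have hkM : k ≤ M * d := by
      rcases Nat.even_or_odd L with hLe | hLo
      · have : M = L := by
          rcases hLe with ⟨w, hw⟩; omega
        rw [this, Nat.mul_comm, hdL]
        exact hk1
      · have hML' : M = L - 1 := by
          rcases hLo with ⟨w, hw⟩; omega
        have h8 := hk3 hLo
        have h7 : d * (L - 1) + d * 1 = d * L := by
          rw [← Nat.mul_add]; congr 1; omega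
        rw [hML', Nat.mul_comm]
        omega
    set c : Fin d → ℕ := fun r => min M (k - M * r.val) with hc
    set e := Equiv.ofBijective _ (phi_bij hm0 hmN) with he
    refine ⟨fun i => pat L (c (e.symm i).1) (e.symm i).2, ?_⟩
    rw [cnt_eq_sum hm0 hmN]
    have hfp : ∀ (r : Fin d) (j : Fin L),
        pat L (c (e.symm (phi N m (hm0.trans hmN) (r, j))).1)
          (e.symm (phi N m (hm0.trans hmN) (r, j))).2 = pat L (c r) j := by
      intro r j
      have : e.symm (phi N m (hm0.trans hmN) (r, j)) = (r, j) := by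
        rw [show phi N m (hm0.trans hmN) (r, j) = e (r, j) from rfl,
          Equiv.symm_apply_apply]
      rw [this]
    have hcyc : ∀ r : Fin d,
        cyc (fun j => pat L (c (e.symm (phi N m (hm0.trans hmN) (r, j))).1)
          (e.symm (phi N m (hm0.trans hmN) (r, j))).2) = c r := by
      intro r
      have heq : (fun j => pat L (c (e.symm (phi N m (hm0.trans hmN) (r, j))).1)
          (e.symm (phi N m (hm0.trans hmN) (r, j))).2) = pat L (c r) := by
        funext j
        exact hfp r j
      rw [heq]
      apply cyc_pat hL2
      · have hMr : Even (M * r.val) := hMeven.mul_right _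
        have hcr : c r = min M (k - M * r.val) := rfl
        rw [hcr]
        rcases le_total M (k - M * r.val) with hle | hle
        · rw [min_eq_left hle]; exact hMeven
        · rw [min_eq_right hle]
          rcases hMr with ⟨w1, hw1⟩
          rcases hk2 with ⟨w2, hw2⟩
          refine ⟨(k - M * r.val)/2, ?_⟩
          omega
      · exact le_trans (min_le_left _ _) hML
    rw [Finset.sum_congr rfl (fun r _ => hcyc r)]
    rw [hc]
    have : ∑ r : Fin d, min M (k - M * r.val)
        = ∑ r ∈ Finset.range d, min M (k - M * r) :=
      Fin.sum_univ_eq_sum_range (fun r => min M (k - M * r)) d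
    rw [this, sum_min]
    exact min_eq_left hkM

/-! ### main theorem -/

theorem binary_realizable_iff (m n k : ℕ) (hm : 1 ≤ m) (hn : 1 ≤ n) :
    (∃ x y : List (Fin 2), x.length = m ∧ y.length = n ∧
        hdist (x ++ y) (y ++ x) = k) ↔
      (k ≤ m + n ∧ Even k ∧
        (Odd ((m + n) / Nat.gcd m n) → k ≤ m + n - Nat.gcd m n)) := by
  have hgcd : Nat.gcd m (m + n) = Nat.gcd m n := by
    rw [Nat.add_comm m n, Nat.gcd_add_self_right]
  rw [← hgcd]
  rw [← cnt_iff (m + n) m n k hm hn rfl]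
  constructor
  · rintro ⟨x, y, hx, hy, hk⟩
    have hslen : (x ++ y).length = m + n := by simp [hx, hy]
    refine ⟨fun i => (x ++ y).get (Fin.cast hslen.symm i), ?_⟩
    rw [← hdist_eq_cnt hm rfl x y hx hy _ ?_]
    · exact hk
    · apply List.ext_getElem
      · simp [hslen]
      · intro i h1 h2
        simp [List.getElem_ofFn]
  · rintro ⟨f, hf⟩
    refine ⟨(List.ofFn f).take m, (List.ofFn f).drop m, ?_, ?_, ?_⟩
    · rw [List.length_take, List.length_ofFn]
      omega
    · rw [List.length_drop, List.length_ofFn]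
      omega
    · rw [hdist_eq_cnt hm rfl _ _ ?_ ?_ f (List.take_append_drop m (List.ofFn f))]
      · exact hf
      · rw [List.length_take, List.length_ofFn]; omega
      · rw [List.length_drop, List.length_ofFn]; omega
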